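/- Every continuous convex piecewise quadratic function φ on a bounded interval with s quadratic segments can be written as the difference of two pointwise maxima: φ(x) = max_{1<=i<=s}(q_i x^2 + (l_i + α_i) x + (c_i + β_i)) - max_{1<=i<=s}(α_i x + β_i) for suitable real coefficients α_i, β_i; equivalently, φ is exactly represented by a max-out neural network with one hidden layer of two max-out neurons (each taking the max of s affine functions of the augmented input (x, x^2)). -/

import Mathlib

open Set
lemma quad_sign (A B C w t lo hi : ℝ) (hw : A * w^2 + B * w + C = 0)
    (hwlo : lo ≤ w) (hwhi : w ≤ hi) (htlo : lo ≤ t) (hthi : t ≤ hi)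
    (hsl : ∀ u, lo ≤ u → u ≤ hi → 0 ≤ 2 * A * u + B) :
    (w ≤ t → 0 ≤ A * t^2 + B * t + C) ∧ (t ≤ w → A * t^2 + B * t + C ≤ 0) := by
  have hm := hsl ((t + w)/2) (by linarith) (by linarith)
  constructor <;> intro h
  · nlinarith [mul_nonneg (sub_nonneg.2 h) hm]
  · nlinarith [mul_nonneg (sub_nonneg.2 h) hm]

lemma chain_max (s : ℕ) (x : Fin (s+2) → ℝ) (hx : Monotone x)
    (a b d : Fin (s+1) → ℝ)
    (hcont : ∀ k : Fin s,
      a k.castSucc * (x k.castSucc.succ)^2 + b k.castSucc * x k.castSucc.succ + d k.castSucc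
        = a k.succ * (x k.castSucc.succ)^2 + b k.succ * x k.castSucc.succ + d k.succ)
    (hslope : ∀ k : Fin s, ∀ u, x 0 ≤ u → u ≤ x (Fin.last (s+1)) →
      2 * a k.castSucc * u + b k.castSucc ≤ 2 * a k.succ * u + b k.succ)
    (i j : Fin (s+1)) (t : ℝ) (ht : t ∈ Icc (x i.castSucc) (x i.succ)) :
    a j * t^2 + b j * t + d j ≤ a i * t^2 + b i * t + d i := by
  have htlo : x 0 ≤ t := le_trans (hx (Fin.zero_le _)) ht.1
  have hthi : t ≤ x (Fin.last (s+1)) := ht.2.trans (hx (Fin.le_last _))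
  have step : ∀ k : Fin s,
      (x k.castSucc.succ ≤ t →
        a k.castSucc * t^2 + b k.castSucc * t + d k.castSucc ≤
          a k.succ * t^2 + b k.succ * t + d k.succ) ∧
      (t ≤ x k.castSucc.succ →
        a k.succ * t^2 + b k.succ * t + d k.succ ≤
          a k.castSucc * t^2 + b k.castSucc * t + d k.castSucc) := by
    intro k
    set w := x k.castSucc.succ with hwdef
    have hwlo : x 0 ≤ w := hx (Fin.zero_le _)
    have hwhi : w ≤ x (Fin.last (s+1)) := hx (Fin.le_last _)
    have hq := quad_sign (a k.succ - a k.castSucc) (b k.succ - b k.castSucc)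
      (d k.succ - d k.castSucc) w t (x 0) (x (Fin.last (s+1)))
      (by linear_combination - hcont k) hwlo hwhi htlo hthi
      (fun u hu1 hu2 => by have := hslope k u hu1 hu2; linarith)
    constructor
    · intro h; have := hq.1 h; nlinarith [this]
    · intro h; have := hq.2 h; nlinarith [this]
  have right : ∀ m : ℕ, ∀ j : Fin (s+1), j.val + m = i.val →
      a j * t^2 + b j * t + d j ≤ a i * t^2 + b i * t + d i := by
    intro m
    induction m with
    | zero =>
      intro j hj
      have : j = i := Fin.ext (by omega)
      rw [this]
    | succ m ih =>
      intro j hj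
      have hjs : j.val < s := by omega
      set k : Fin s := ⟨j.val, hjs⟩ with hk
      have hk1 : k.castSucc = j := Fin.ext rfl
      have hwt : x k.castSucc.succ ≤ t := by
        have hle : (k.castSucc.succ : Fin (s+2)) ≤ i.castSucc := by
          simp only [Fin.le_def, Fin.val_succ, Fin.coe_castSucc, Fin.val_castSucc, hk, Fin.val_mk]
          omega
        exact le_trans (hx hle) ht.1
      have h1 := (step k).1 hwt
      rw [hk1] at h1
      exact h1.trans (ih k.succ (by simp only [Fin.val_succ, hk, Fin.val_mk]; omega))
  have left : ∀ m : ℕ, ∀ j : Fin (s+1), i.val + m = j.val →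
      a j * t^2 + b j * t + d j ≤ a i * t^2 + b i * t + d i := by
    intro m
    induction m with
    | zero =>
      intro j hj
      have : j = i := Fin.ext (by omega)
      rw [this]
    | succ m ih =>
      intro j hj
      have hjpos : 1 ≤ j.val := by omega
      have hjs : j.val - 1 < s := by omega
      set k : Fin s := ⟨j.val - 1, hjs⟩ with hk
      have hk1 : k.succ = j := Fin.ext (by simp only [Fin.val_succ, hk, Fin.val_mk]; omega)
      have hwt : t ≤ x k.castSucc.succ := by
        have hle : (i.succ : Fin (s+2)) ≤ k.castSucc.succ := by
          simp only [Fin.le_def, Fin.val_succ, Fin.coe_castSucc, Fin.val_castSucc, hk, Fin.val_mk]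
          omega
        exact ht.2.trans (hx hle)
      have h1 := (step k).2 hwt
      rw [hk1] at h1
      exact h1.trans (ih k.castSucc (by simp only [Fin.coe_castSucc, Fin.val_castSucc, hk, Fin.val_mk]; omega))
  rcases le_total j.val i.val with h | h
  · exact right (i.val - j.val) j (by omega)
  · exact left (j.val - i.val) j (by omega)

theorem pwq_maxout_representation
    (s : ℕ)
    (x : Fin (s + 2) → ℝ) (hx : StrictMono x)
    (q l c : Fin (s + 1) → ℝ)
    (φ : ℝ → ℝ)
    (hφ : ∀ i : Fin (s + 1), ∀ t ∈ Icc (x i.castSucc) (x i.succ),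
      φ t = q i * t ^ 2 + l i * t + c i)
    (hq : ∀ i, 0 ≤ q i)
    (hkink : ∀ i : Fin s,
      2 * q i.castSucc * x i.castSucc.succ + l i.castSucc ≤
        2 * q i.succ * x i.castSucc.succ + l i.succ) :
    ∃ α β : Fin (s + 1) → ℝ,
      ∀ t ∈ Icc (x 0) (x (Fin.last (s + 1))),
        φ t =
          Finset.univ.sup' Finset.univ_nonempty
            (fun i : Fin (s + 1) => q i * t ^ 2 + (l i + α i) * t + (c i + β i)) -
          Finset.univ.sup' Finset.univ_nonempty
            (fun i : Fin (s + 1) => α i * t + β i) := by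
  classical
  have hxm : Monotone x := hx.monotone
  set D : ℝ := x (Fin.last (s+1)) - x 0 with hD
  set Q : ℝ := Finset.univ.sup' Finset.univ_nonempty q with hQ
  have hQ0 : 0 ≤ Q := le_trans (hq 0) (Finset.le_sup' q (Finset.mem_univ 0))
  have hD0 : 0 ≤ D := sub_nonneg.2 (hxm (Fin.zero_le _))
  set M : ℝ := 2 * Q * D with hM
  have hM0 : 0 ≤ M := by positivity
  set X : ℕ → ℝ := fun n => x ⟨min n (s+1), by omega⟩ with hX
  set α : Fin (s+1) → ℝ := fun i => M * i.val with hα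
  set β : Fin (s+1) → ℝ := fun i => -(M * ∑ j ∈ Finset.range i.val, X (j+1)) with hβ
  -- continuity of ψ at the kinks
  have hXval : ∀ k : Fin s, X (k.val + 1) = x k.castSucc.succ := by
    intro k
    have : (⟨min (k.val+1) (s+1), by omega⟩ : Fin (s+2)) = k.castSucc.succ := by
      apply Fin.ext
      simp only [Fin.val_succ, Fin.coe_castSucc]
      omega
    simp only [hX, this]
  have hψcont : ∀ k : Fin s,
      α k.castSucc * x k.castSucc.succ + β k.castSucc
        = α k.succ * x k.castSucc.succ + β k.succ := by
    intro k
    simp only [hα, hβ, Fin.val_succ, Fin.coe_castSucc, Finset.sum_range_succ, hXval k]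
    push_cast
    ring
  -- continuity of φ pieces at the kinks
  have hφcont : ∀ k : Fin s,
      q k.castSucc * (x k.castSucc.succ)^2 + l k.castSucc * x k.castSucc.succ + c k.castSucc
        = q k.succ * (x k.castSucc.succ)^2 + l k.succ * x k.castSucc.succ + c k.succ := by
    intro k
    have hcs : (k.castSucc.succ : Fin (s+2)) = k.succ.castSucc := by
      apply Fin.ext; simp
    have e1 := hφ k.castSucc (x k.castSucc.succ)
      ⟨hxm (by simp [Fin.le_def]), le_refl _⟩
    have e2 := hφ k.succ (x k.castSucc.succ)
      ⟨by rw [hcs], by rw [hcs]; exact hxm (by simp [Fin.le_def])⟩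
    rw [e1] at e2
    linarith [e2]
  -- slope condition for g = φ-piece + ψ-piece
  have hgslope : ∀ k : Fin s, ∀ u, x 0 ≤ u → u ≤ x (Fin.last (s+1)) →
      2 * q k.castSucc * u + (l k.castSucc + α k.castSucc) ≤
        2 * q k.succ * u + (l k.succ + α k.succ) := by
    intro k u hu1 hu2
    have hk := hkink k
    set w := x k.castSucc.succ with hw
    have hw1 : x 0 ≤ w := hxm (Fin.zero_le _)
    have hw2 : w ≤ x (Fin.last (s+1)) := hxm (Fin.le_last _)
    have hqc : q k.castSucc ≤ Q := Finset.le_sup' q (Finset.mem_univ _)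
    have hqs : q k.succ ≤ Q := Finset.le_sup' q (Finset.mem_univ _)
    have hqc0 := hq k.castSucc
    have hqs0 := hq k.succ
    have p1 : 0 ≤ (Q - (q k.castSucc - q k.succ)) * (D + (u - w)) := by
      apply mul_nonneg <;> [linarith; linarith [hD]]
    have p2 : 0 ≤ (Q + (q k.castSucc - q k.succ)) * (D - (u - w)) := by
      apply mul_nonneg <;> [linarith; linarith [hD]]
    have hαv : α k.succ - α k.castSucc = M := by
      simp only [hα, Fin.val_succ, Fin.coe_castSucc]
      push_cast; ring
    nlinarith [p1, p2, hk, hαv]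
  have hψslope : ∀ k : Fin s, ∀ u, x 0 ≤ u → u ≤ x (Fin.last (s+1)) →
      2 * (0:ℝ) * u + α k.castSucc ≤ 2 * (0:ℝ) * u + α k.succ := by
    intro k u _ _
    simp only [hα, Fin.val_succ, Fin.coe_castSucc]
    push_cast
    nlinarith [hM0]
  refine ⟨α, β, ?_⟩
  intro t ht
  -- locate the segment containing t
  set T : Finset (Fin (s+1)) := Finset.univ.filter (fun i => x i.castSucc ≤ t) with hT
  have hT0 : (0 : Fin (s+1)) ∈ T := by
    simp only [hT, Finset.mem_filter, Finset.mem_univ, true_and, Fin.castSucc_zero]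
    exact ht.1
  have hTne : T.Nonempty := ⟨0, hT0⟩
  set i : Fin (s+1) := T.max' hTne with hi
  have hi1 : x i.castSucc ≤ t := (Finset.mem_filter.1 (T.max'_mem hTne)).2
  have hi2 : t ≤ x i.succ := by
    by_cases hs : i.val = s
    · have : i.succ = Fin.last (s+1) := by apply Fin.ext; simp [hs]
      rw [this]; exact ht.2
    · have hlt : i.val < s := lt_of_le_of_ne (Nat.lt_succ_iff.1 i.isLt) hs
      set i' : Fin (s+1) := ⟨i.val + 1, by omega⟩ with hi'
      have hnm : i' ∉ T := by
        intro hmem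
        have := T.le_max' i' hmem
        rw [← hi] at this
        simp only [Fin.le_def, hi'] at this
        omega
      have : ¬ x i'.castSucc ≤ t := by
        intro hle
        exact hnm (by simp [hT, hle])
      have heq : (i'.castSucc : Fin (s+2)) = i.succ := by
        apply Fin.ext; simp [hi']
      rw [heq] at this
      linarith [lt_of_not_ge this]
  have hti : t ∈ Icc (x i.castSucc) (x i.succ) := ⟨hi1, hi2⟩
  -- dominance for the quadratic max
  have hgmax : ∀ j : Fin (s+1),
      q j * t^2 + (l j + α j) * t + (c j + β j) ≤
        q i * t^2 + (l i + α i) * t + (c i + β i) := by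
    intro j
    exact chain_max s x hxm q (fun j => l j + α j) (fun j => c j + β j)
      (fun k => by have := hφcont k; have := hψcont k; ring_nf; ring_nf at *; linarith)
      hgslope i j t hti
  have hψmax : ∀ j : Fin (s+1), α j * t + β j ≤ α i * t + β i := by
    intro j
    have := chain_max s x hxm (fun _ => 0) α β
      (fun k => by have := hψcont k; ring_nf; ring_nf at *; linarith)
      hψslope i j t hti
    simpa using this
  have e1 : Finset.univ.sup' Finset.univ_nonempty
      (fun j : Fin (s+1) => q j * t^2 + (l j + α j) * t + (c j + β j))
      = q i * t^2 + (l i + α i) * t + (c i + β i) :=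
    le_antisymm (Finset.sup'_le _ _ fun j _ => hgmax j)
      (Finset.le_sup' (fun j : Fin (s+1) => q j * t^2 + (l j + α j) * t + (c j + β j))
        (Finset.mem_univ i))
  have e2 : Finset.univ.sup' Finset.univ_nonempty
      (fun j : Fin (s+1) => α j * t + β j) = α i * t + β i :=
    le_antisymm (Finset.sup'_le _ _ fun j _ => hψmax j)
      (Finset.le_sup' (fun j : Fin (s+1) => α j * t + β j) (Finset.mem_univ i))
  rw [e1, e2, hφ i t hti]
  ring
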